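/- Let q = p^d be an odd prime power with p prime, let m divide q − 1, and set r = (q−1)/m. Then G_{q,m} is a primitive permutation group on 𝔽_q if and only if r does not divide p^i − 1 for every i with 1 ≤ i ≤ d − 1. -/

import Mathlib

/-- A section of a partition: a set containing exactly one element of each part. -/
def IsSection {Ω : Type*} (P : Set (Set Ω)) (S : Set Ω) : Prop :=
  ∀ B ∈ P, ∃! x, x ∈ S ∧ x ∈ B

/-- A partition is `G`-regular if it admits a section `S` such that `Sg` is a
section for every `g ∈ G`. -/
def IsGRegular {Ω : Type*} (G : Subgroup (Equiv.Perm Ω)) (P : Set (Set Ω)) : Prop :=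
  ∃ S : Set Ω, IsSection P S ∧ ∀ g ∈ G, IsSection P ((⇑g) '' S)

/-- The trivial partitions: the one-block partition and the partition into singletons. -/
def IsTrivialPartition {Ω : Type*} (P : Set (Set Ω)) : Prop :=
  P = {Set.univ} ∨ P = Set.range (fun x : Ω => ({x} : Set Ω))

/-- A permutation group is transitive if any point can be mapped to any other. -/
def IsTransitivePermGroup {Ω : Type*} (G : Subgroup (Equiv.Perm Ω)) : Prop :=
  ∀ a b : Ω, ∃ g ∈ G, g a = b

/-- A partition is `G`-invariant if `G` permutes its parts. -/
def IsInvariantPartition {Ω : Type*} (G : Subgroup (Equiv.Perm Ω)) (P : Set (Set Ω)) : Prop :=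
  ∀ g ∈ G, ∀ B ∈ P, (⇑g) '' B ∈ P

/-- A permutation group is primitive if it is transitive and preserves no
non-trivial partition. -/
def IsPrimitivePermGroup {Ω : Type*} (G : Subgroup (Equiv.Perm Ω)) : Prop :=
  IsTransitivePermGroup G ∧
    ∀ P : Set (Set Ω), Setoid.IsPartition P → IsInvariantPartition G P → IsTrivialPartition P

/-- A permutation group is synchronizing if it is non-trivial and its only
`G`-regular partitions are the trivial ones. -/
def IsSynchronizing {Ω : Type*} (G : Subgroup (Equiv.Perm Ω)) : Prop :=
  G ≠ ⊥ ∧ ∀ P : Set (Set Ω), Setoid.IsPartition P → IsGRegular G P → IsTrivialPartition P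

/-- The set `S_{q,m}` of `m`-th powers of nonzero elements of a field. -/
def mthPowers (F : Type*) [Field F] (m : ℕ) : Set F :=
  {x : F | ∃ a : F, a ≠ 0 ∧ a ^ m = x}

/-- The group `G_{q,m} ≤ Sym(F)`, generated by all translations `x ↦ x + α` and the
multiplications `x ↦ x * α` for `α ∈ S_{q,m}`. -/
def Gqm (F : Type*) [Field F] (m : ℕ) : Subgroup (Equiv.Perm F) :=
  Subgroup.closure
    ((Set.range fun a : F => Equiv.addRight a) ∪
      {e : Equiv.Perm F | ∃ (a : F) (ha : a ≠ 0), a ∈ mthPowers F m ∧ e = Equiv.mulRight₀ a ha})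

section Helpers
variable {F : Type*} [Field F] {m : ℕ}

lemma mthPowers_ne_zero {x : F} (hx : x ∈ mthPowers F m) : x ≠ 0 := by
  obtain ⟨a, ha, rfl⟩ := hx; exact pow_ne_zero m ha

lemma one_mem_mthPowers : (1 : F) ∈ mthPowers F m := ⟨1, one_ne_zero, one_pow m⟩

lemma mul_mem_mthPowers {x y : F} (hx : x ∈ mthPowers F m) (hy : y ∈ mthPowers F m) :
    x * y ∈ mthPowers F m := by
  obtain ⟨a, ha, rfl⟩ := hx; obtain ⟨b, hb, rfl⟩ := hy
  exact ⟨a * b, mul_ne_zero ha hb, mul_pow a b m⟩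

lemma inv_mem_mthPowers {x : F} (hx : x ∈ mthPowers F m) : x⁻¹ ∈ mthPowers F m := by
  obtain ⟨a, ha, rfl⟩ := hx
  exact ⟨a⁻¹, inv_ne_zero ha, by rw [inv_pow]⟩

lemma addRight_mem_Gqm (a : F) : Equiv.addRight a ∈ Gqm F m :=
  Subgroup.subset_closure (Or.inl ⟨a, rfl⟩)

lemma mulRight_mem_Gqm {a : F} (ha : a ≠ 0) (hS : a ∈ mthPowers F m) :
    Equiv.mulRight₀ a ha ∈ Gqm F m :=
  Subgroup.subset_closure (Or.inr ⟨a, ha, hS, rfl⟩)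

lemma Gqm_affine {g : Equiv.Perm F} (hg : g ∈ Gqm F m) :
    ∃ c t : F, c ∈ mthPowers F m ∧ ∀ x, g x = x * c + t := by
  induction hg using Subgroup.closure_induction with
  | mem e he =>
    rcases he with ⟨a, rfl⟩ | ⟨a, ha, haS, rfl⟩
    · exact ⟨1, a, one_mem_mthPowers, fun x => by simp⟩
    · exact ⟨a, 0, haS, fun x => by simp⟩
  | one => exact ⟨1, 0, one_mem_mthPowers, fun x => by simp⟩
  | mul g h _ _ hg hh =>
    obtain ⟨c, t, hc, hgx⟩ := hg
    obtain ⟨c', t', hc', hhx⟩ := hh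
    refine ⟨c' * c, t' * c + t, mul_mem_mthPowers hc' hc, fun x => ?_⟩
    rw [Equiv.Perm.mul_apply, hhx, hgx]; ring
  | inv g _ hg =>
    obtain ⟨c, t, hc, hgx⟩ := hg
    have hc0 : c ≠ 0 := mthPowers_ne_zero hc
    refine ⟨c⁻¹, -(t * c⁻¹), inv_mem_mthPowers hc, fun x => ?_⟩
    have h1 : g (x * c⁻¹ + -(t * c⁻¹)) = x := by
      rw [hgx]; field_simp; ring
    have h2 := congrArg (⇑g⁻¹) h1
    rw [← Equiv.Perm.mul_apply, inv_mul_cancel, Equiv.Perm.one_apply] at h2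
    exact h2.symm

lemma card_pow_fixed_le (F : Type*) [Field F] [Fintype F] [DecidableEq F] (n : ℕ) (hn : 2 ≤ n) :
    (Finset.univ.filter (fun x : F => x ^ n = x)).card ≤ n := by
  classical
  set P : Polynomial F := Polynomial.X ^ n - Polynomial.X with hP
  have hPne : P ≠ 0 := by
    intro h
    have : P.coeff n = 1 := by
      simp only [hP, Polynomial.coeff_sub, Polynomial.coeff_X_pow, if_pos rfl,
        Polynomial.coeff_X, if_neg (by omega : ¬ (1 = n))]
      simp
    rw [h] at this; simp at this
  have hsub : (Finset.univ.filter (fun x : F => x ^ n = x)) ⊆ P.roots.toFinset := by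
    intro x hx
    rw [Finset.mem_filter] at hx
    rw [Multiset.mem_toFinset, Polynomial.mem_roots hPne]
    simp [hP, Polynomial.IsRoot, sub_eq_zero, hx.2]
  calc (Finset.univ.filter (fun x : F => x ^ n = x)).card
      ≤ P.roots.toFinset.card := Finset.card_le_card hsub
    _ ≤ Multiset.card P.roots := Multiset.toFinset_card_le _
    _ ≤ P.natDegree := Polynomial.card_roots' P
    _ ≤ n := by
        apply le_trans (Polynomial.natDegree_sub_le _ _)
        simp [Polynomial.natDegree_X_pow, Polynomial.natDegree_X]
        omega

def frobFixedSubfield (F : Type*) [Field F] (p i : ℕ) [Fact p.Prime] [CharP F p]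
    (hoddp : Odd p) : Subfield F where
  carrier := {x | x ^ p ^ i = x}
  one_mem' := by simp
  mul_mem' := by
    intro a b ha hb
    simp only [Set.mem_setOf_eq] at *
    rw [mul_pow, ha, hb]
  add_mem' := by
    intro a b ha hb
    simp only [Set.mem_setOf_eq] at *
    rw [add_pow_char_pow, ha, hb]
  zero_mem' := by
    simp only [Set.mem_setOf_eq]
    exact zero_pow (pow_ne_zero i (Fact.out (p := p.Prime)).ne_zero)
  neg_mem' := by
    intro a ha
    simp only [Set.mem_setOf_eq] at *
    rw [Odd.neg_pow (hoddp.pow), ha]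
  inv_mem' := by
    intro a ha
    simp only [Set.mem_setOf_eq] at *
    rw [inv_pow, ha]

lemma mem_frobFixedSubfield (F : Type*) [Field F] (p i : ℕ) [Fact p.Prime] [CharP F p]
    (hoddp : Odd p) (x : F) : x ∈ frobFixedSubfield F p i hoddp ↔ x ^ p ^ i = x := Iff.rfl

end Helpers


/-- `G_{q,m}` is primitive iff `r = (q-1)/m` divides no `p^i - 1` with `1 ≤ i ≤ d-1`. -/
theorem stmt4 (p d q m r : ℕ) (hp : p.Prime) (hodd : Odd q) (hq : q = p ^ d)
    (hm : m ∣ q - 1) (hr : r = (q - 1) / m)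
    (F : Type*) [Field F] [Fintype F] (hF : Fintype.card F = q) :
    IsPrimitivePermGroup (Gqm F m) ↔ ∀ i, 1 ≤ i → i ≤ d - 1 → ¬ (r ∣ p ^ i - 1) := by
  classical
  have hq2 : 2 ≤ q := by rw [← hF]; exact Fintype.one_lt_card
  have hd1 : 1 ≤ d := by
    rcases Nat.eq_zero_or_pos d with h | h
    · rw [h, pow_zero] at hq; omega
    · exact h
  have hp2 : 2 ≤ p := hp.two_le
  have hoddp : Odd p := by
    rcases Nat.even_or_odd p with he | ho
    · exfalso
      obtain ⟨c, hc⟩ := he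
      have h2p : 2 ∣ p := ⟨c, by omega⟩
      have h2q : 2 ∣ q := by
        rw [hq]; exact dvd_trans h2p (dvd_pow_self p (by omega))
      rw [Nat.odd_iff] at hodd
      omega
    · exact ho
  have hm0 : m ≠ 0 := by
    rintro rfl
    rw [Nat.zero_dvd] at hm
    omega
  have hmr : m * r = q - 1 := by rw [hr]; exact Nat.mul_div_cancel' hm
  have hr0 : r ≠ 0 := by
    rintro rfl
    omega
  haveI hPF : Fact p.Prime := ⟨hp⟩
  haveI hcharF : CharP F p := by
    have hch := ringChar.charP F
    obtain ⟨n, hp', hcard⟩ := FiniteField.card F (ringChar F)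
    have h1 : p ∣ ringChar F ^ (n : ℕ) := by
      rw [← hcard, hF, hq]
      exact dvd_pow_self p (by omega)
    have hpp' : p = ringChar F :=
      (Nat.prime_dvd_prime_iff_eq hp hp').mp (hp.dvd_of_dvd_pow h1)
    rw [hpp']; exact hch
  set S := mthPowers F m with hSdef
  set K := Subfield.closure S with hKdef
  have hSsubK : S ⊆ ↑K := Subfield.subset_closure
  have hsr : ∀ s ∈ S, s ^ r = 1 := by
    rintro s ⟨a, ha, rfl⟩
    rw [← pow_mul, hmr]
    have := FiniteField.pow_card_sub_one_eq_one a ha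
    rwa [hF] at this
  constructor
  · -- primitive → arithmetic condition
    intro hprim i hi1 hi2
    by_contra hdvd
    -- K is contained in the fixed field of the i-th Frobenius power
    set R := frobFixedSubfield F p i hoddp with hRdef
    have hSR : S ⊆ ↑R := by
      intro s hs
      rw [SetLike.mem_coe, mem_frobFixedSubfield]
      obtain ⟨j, hj⟩ := hdvd
      have h1 : s ^ (p ^ i - 1) = 1 := by
        rw [hj, pow_mul, hsr s hs, one_pow]
      have hpi : 1 ≤ p ^ i := Nat.one_le_pow _ _ (by omega)
      calc s ^ p ^ i = s ^ (p ^ i - 1 + 1) := by rw [Nat.sub_add_cancel hpi]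
        _ = s := by rw [pow_succ, h1, one_mul]
    have hKR : K ≤ R := Subfield.closure_le.mpr hSR
    have hcardR : Nat.card R ≤ p ^ i := by
      have h2 : 2 ≤ p ^ i := by
        calc 2 = 2 ^ 1 := by norm_num
          _ ≤ p ^ i := Nat.pow_le_pow_left hp2 1 |>.trans (Nat.pow_le_pow_right (by omega) hi1)
      have hle := card_pow_fixed_le F (p ^ i) h2
      have heq : Nat.card R = (Finset.univ.filter (fun x : F => x ^ p ^ i = x)).card := by
        rw [Nat.card_eq_fintype_card, ← Fintype.card_subtype]
        exact Fintype.card_congr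
          (Equiv.subtypeEquivRight (fun x => mem_frobFixedSubfield F p i hoddp x))
      omega
    have hcardKR : Nat.card K ≤ Nat.card R := by
      have hinj : Function.Injective (fun x : ↥K => (⟨x.1, hKR x.2⟩ : ↥R)) := by
        intro a b h
        simp only [Subtype.mk.injEq] at h
        exact Subtype.ext h
      exact Nat.card_le_card_of_injective _ hinj
    have hKltF : Nat.card K < Nat.card F := by
      have h1 : p ^ i ≤ p ^ (d - 1) := Nat.pow_le_pow_right (by omega) hi2
      have h2 : p ^ (d - 1) < p ^ d := Nat.pow_lt_pow_right (by omega) (by omega)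
      have h3 : Nat.card F = p ^ d := by rw [Nat.card_eq_fintype_card, hF, hq]
      omega
    have hKneTop : (K : Set F) ≠ Set.univ := by
      intro h
      have hbij : Function.Bijective (fun x : ↥K => (x : F)) :=
        ⟨Subtype.val_injective, fun x => ⟨⟨x, Set.eq_univ_iff_forall.mp h x⟩, rfl⟩⟩
      have h1 : Nat.card K = Nat.card F := Nat.card_eq_of_bijective _ hbij
      omega
    set Pt : Set (Set F) := {B | ∃ x : F, B = {y | y - x ∈ K}} with hPtdef
    have hcoset_eq : ∀ x a : F, a - x ∈ K → {y : F | y - x ∈ K} = {y | y - a ∈ K} := by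
      intro x a hax
      ext z
      simp only [Set.mem_setOf_eq]
      constructor
      · intro hz
        have h1 : z - a = (z - x) - (a - x) := by ring
        rw [h1]; exact sub_mem hz hax
      · intro hz
        have h1 : z - x = (z - a) + (a - x) := by ring
        rw [h1]; exact add_mem hz hax
    have hPart : Setoid.IsPartition Pt := by
      constructor
      · rintro ⟨x, hx⟩
        have h1 : x ∈ (∅ : Set F) := by
          rw [hx]
          show x - x ∈ K
          rw [sub_self]; exact zero_mem K
        exact h1
      · intro a
        refine ⟨{y | y - a ∈ K}, ⟨⟨a, rfl⟩, by show a - a ∈ K; rw [sub_self]; exact zero_mem K⟩, ?_⟩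
        rintro B ⟨⟨x, rfl⟩, haB⟩
        exact hcoset_eq x a haB
    have hInv : IsInvariantPartition (Gqm F m) Pt := by
      rintro g hg B ⟨x, rfl⟩
      obtain ⟨c, t, hc, hgx⟩ := Gqm_affine hg
      have hc0 : c ≠ 0 := mthPowers_ne_zero hc
      have hcK : c ∈ K := hSsubK hc
      refine ⟨x * c + t, ?_⟩
      ext z
      simp only [Set.mem_image, Set.mem_setOf_eq]
      constructor
      · rintro ⟨y, hy, rfl⟩
        rw [hgx]
        have h1 : y * c + t - (x * c + t) = (y - x) * c := by ring
        rw [h1]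
        exact mul_mem hy hcK
      · intro hz
        refine ⟨(z - t) * c⁻¹, ?_, ?_⟩
        · have h1 : (z - t) * c⁻¹ - x = (z - (x * c + t)) * c⁻¹ := by field_simp; ring
          rw [h1]
          exact mul_mem hz (inv_mem hcK)
        · rw [hgx]; field_simp; ring
    have hKP : (K : Set F) ∈ Pt := ⟨0, by ext z; simp [sub_zero]⟩
    rcases hprim.2 Pt hPart hInv with h | h
    · rw [h] at hKP
      exact hKneTop (by simpa using hKP)
    · rw [h] at hKP
      obtain ⟨x, hx⟩ := hKP
      have h0 : (0 : F) ∈ (K : Set F) := zero_mem K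
      have h1 : (1 : F) ∈ (K : Set F) := one_mem K
      rw [← hx] at h0 h1
      simp only [Set.mem_singleton_iff] at h0 h1
      exact one_ne_zero (h1.trans h0.symm)
  · -- arithmetic condition → primitive
    intro hcond
    constructor
    · intro a b
      refine ⟨Equiv.addRight (b - a), addRight_mem_Gqm _, ?_⟩
      simp
    · intro Pt hPart hInv
      obtain ⟨hne, hblocks⟩ := hPart
      obtain ⟨B, ⟨hBP, hB0⟩, _⟩ := hblocks 0
      have huniq : ∀ (a : F) (C C' : Set F), C ∈ Pt → a ∈ C → C' ∈ Pt → a ∈ C' → C = C' := by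
        intro a C C' hC haC hC' haC'
        obtain ⟨D, _, hD⟩ := hblocks a
        rw [hD C ⟨hC, haC⟩, hD C' ⟨hC', haC'⟩]
      have htrans : ∀ a : F, (fun y => y + a) '' B ∈ Pt := by
        intro a
        have h1 := hInv (Equiv.addRight a) (addRight_mem_Gqm a) B hBP
        simpa using h1
      have hblocka : ∀ (a : F) (C : Set F), C ∈ Pt → a ∈ C → C = (fun y => y + a) '' B := by
        intro a C hC haC
        exact huniq a C _ hC haC (htrans a) ⟨0, hB0, by simp⟩
      have hBadd : ∀ b ∈ B, (fun y => y + b) '' B = B := fun b hb =>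
        (hblocka b B hBP hb).symm
      have haddB : ∀ x ∈ B, ∀ b ∈ B, x + b ∈ B := by
        intro x hx b hb
        rw [← hBadd b hb]; exact ⟨x, hx, rfl⟩
      have hnegB : ∀ b ∈ B, -b ∈ B := by
        intro b hb
        have h0 : (0 : F) ∈ (fun y => y + b) '' B := by rw [hBadd b hb]; exact hB0
        obtain ⟨x, hx, hxb⟩ := h0
        have hxeq : x = -b := eq_neg_of_add_eq_zero_left hxb
        rwa [← hxeq]
      have hmulS : ∀ s ∈ S, ∀ x ∈ B, x * s ∈ B := by
        intro s hs x hx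
        have hs0 : s ≠ 0 := mthPowers_ne_zero hs
        have himg := hInv (Equiv.mulRight₀ s hs0) (mulRight_mem_Gqm hs0 hs) B hBP
        have h0 : (0 : F) ∈ (⇑(Equiv.mulRight₀ s hs0)) '' B := ⟨0, hB0, by simp⟩
        have heq := huniq 0 _ B himg h0 hBP hB0
        rw [← heq]; exact ⟨x, hx, by simp⟩
      have hKB : ∀ c ∈ K, ∀ b ∈ B, c * b ∈ B := by
        intro c hc
        induction hc using Subfield.closure_induction with
        | mem s hs => intro b hb; rw [mul_comm]; exact hmulS s hs b hb
        | one => intro b hb; rwa [one_mul]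
        | add c1 c2 _ _ h1 h2 => intro b hb; rw [add_mul]; exact haddB _ (h1 b hb) _ (h2 b hb)
        | neg c _ h => intro b hb; rw [neg_mul]; exact hnegB _ (h b hb)
        | mul c1 c2 _ _ h1 h2 => intro b hb; rw [mul_assoc]; exact h1 _ (h2 b hb)
        | inv c _ h =>
          intro b hb
          by_cases hc0 : c = 0
          · rw [hc0, inv_zero, zero_mul]; exact hB0
          · have himg : (fun y => c * y) '' B = B := by
              apply Set.eq_of_subset_of_ncard_le
              · rintro _ ⟨y, hy, rfl⟩; exact h y hy
              · rw [Set.ncard_image_of_injective B (mul_right_injective₀ hc0)]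
              · exact Set.toFinite B
            rw [← himg] at hb
            obtain ⟨y, hy, rfl⟩ := hb
            rwa [inv_mul_cancel_left₀ hc0]
      by_cases hBzero : B = {0}
      · right
        have hsing : ∀ (a : F) (C : Set F), C ∈ Pt → a ∈ C → C = {a} := by
          intro a C hC haC
          rw [hblocka a C hC haC, hBzero]
          simp
        ext C
        simp only [Set.mem_range]
        constructor
        · intro hC
          have hCne : C.Nonempty := by
            rcases C.eq_empty_or_nonempty with h | h
            · exact absurd (h ▸ hC) hne
            · exact h
          obtain ⟨a, ha⟩ := hCne
          exact ⟨a, (hsing a C hC ha).symm⟩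
        · rintro ⟨a, rfl⟩
          obtain ⟨D, ⟨hD, haD⟩, _⟩ := hblocks a
          have h1 := hsing a D hD haD
          rwa [h1] at hD
      · by_cases hBuniv : B = Set.univ
        · left
          ext C
          simp only [Set.mem_singleton_iff]
          constructor
          · intro hC
            have hCne : C.Nonempty := by
              rcases C.eq_empty_or_nonempty with h | h
              · exact absurd (h ▸ hC) hne
              · exact h
            obtain ⟨a, ha⟩ := hCne
            rw [hblocka a C hC ha, hBuniv]
            rw [Set.image_univ]
            exact Set.range_eq_univ.mpr (fun z => ⟨z - a, by ring⟩)
          · intro h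
            rw [h, ← hBuniv]
            exact hBP
        · exfalso
          obtain ⟨b0, hb0B, hb00⟩ : ∃ b ∈ B, b ≠ 0 := by
            by_contra h
            push_neg at h
            exact hBzero (Set.eq_singleton_iff_unique_mem.mpr ⟨hB0, h⟩)
          have hinj : Function.Injective
              (fun c : ↥K => (⟨c.1 * b0, hKB c.1 c.2 b0 hb0B⟩ : ↥B)) := by
            intro c1 c2 h
            simp only [Subtype.mk.injEq] at h
            exact Subtype.ext (mul_right_cancel₀ hb00 h)
          have hcard1 : Nat.card K ≤ Nat.card B := Nat.card_le_card_of_injective _ hinj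
          have hcard2 : Nat.card B < Nat.card F := by
            have h1 : B ⊂ Set.univ := Set.ssubset_univ_iff.mpr hBuniv
            have h2 := Set.ncard_lt_ncard h1 Set.finite_univ
            rwa [Set.ncard_univ, ← Nat.card_coe_set_eq] at h2
          have hdvdK : Nat.card K ∣ Nat.card F := by
            have h1 := AddSubgroup.card_addSubgroup_dvd_card (K.toSubring.toAddSubgroup)
            have he : Nat.card K = Nat.card (K.toSubring.toAddSubgroup) :=
              Nat.card_congr (Equiv.subtypeEquivRight (fun x => Iff.rfl))
            rw [he]; exact h1
          have hcardF : Nat.card F = p ^ d := by rw [Nat.card_eq_fintype_card, hF, hq]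
          rw [hcardF] at hdvdK hcard2
          obtain ⟨k, hkd', hkcard⟩ := (Nat.dvd_prime_pow hp).mp hdvdK
          have h2K : 2 ≤ Nat.card K := by
            have hnt : Nontrivial ↥K :=
              ⟨⟨0, 1, fun h => zero_ne_one (congrArg Subtype.val h)⟩⟩
            have := Finite.one_lt_card_iff_nontrivial.mpr hnt
            omega
          have hk1 : 1 ≤ k := by
            rcases Nat.eq_zero_or_pos k with h | h
            · rw [h, pow_zero] at hkcard; omega
            · exact h
          have hkd : k ≤ d - 1 := by
            have h1 : p ^ k < p ^ d := by omega
            have h2 := (Nat.pow_lt_pow_iff_right (by omega : 1 < p)).mp h1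
            omega
          apply hcond k hk1 hkd
          -- it remains: r ∣ p ^ k - 1
          obtain ⟨ζ, hζ⟩ := IsCyclic.exists_generator (α := Fˣ)
          have hordζ : orderOf ζ = q - 1 := by
            rw [orderOf_eq_card_of_forall_mem_zpowers hζ, Nat.card_units,
              Nat.card_eq_fintype_card, hF]
          have hordm : orderOf (ζ ^ m) = r := by
            rw [orderOf_pow, hordζ, Nat.gcd_eq_right hm, hr]
          set H : Subgroup Fˣ :=
            { carrier := {u : Fˣ | (u : F) ∈ K}
              mul_mem' := by
                intro a b ha hb
                simp only [Set.mem_setOf_eq] at *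
                rw [Units.val_mul]
                exact mul_mem ha hb
              one_mem' := by
                simp only [Set.mem_setOf_eq, Units.val_one]
                exact one_mem K
              inv_mem' := by
                intro u hu
                simp only [Set.mem_setOf_eq] at *
                rw [Units.val_inv_eq_inv_val]
                exact inv_mem hu } with hHdef
          have hζmH : (ζ ^ m : Fˣ) ∈ H := by
            show ((ζ ^ m : Fˣ) : F) ∈ K
            apply hSsubK
            exact ⟨(ζ : F), Units.ne_zero ζ, by push_cast; rfl⟩
          have hrdvd : r ∣ Nat.card H := hordm ▸ Subgroup.orderOf_dvd_natCard H hζmH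
          have hHcard : Nat.card H = Nat.card K - 1 := by
            have e1 : ↥H ≃ {x : ↥K // x ≠ 0} :=
              { toFun := fun u => ⟨⟨((u : Fˣ) : F), u.2⟩, fun hc =>
                  Units.ne_zero (u : Fˣ) (congrArg Subtype.val hc)⟩
                invFun := fun x => ⟨Units.mk0 (x.1 : F)
                  (fun h => x.2 (Subtype.ext h)), x.1.2⟩
                left_inv := fun u => Subtype.ext (Units.ext rfl)
                right_inv := fun x => Subtype.ext (Subtype.ext rfl) }
            rw [Nat.card_congr e1, ← Nat.card_congr (unitsEquivNeZero (G₀ := ↥K)),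
              Nat.card_units]
          rw [hHcard, hkcard] at hrdvd
          exact hrdvd
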